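/- For a 2×2 density matrix ρ with eigenvalues λ₁, λ₂ and an arbitrary 2×2 matrix σ, the generalized skew information satisfies I^ν_ρ(σ) = [1 − 2 m_ν(λ₁,λ₂)] ⟨Δσ⟩²_{λ₁}, where m_ν(λ₁,λ₂) = ((λ₁^ν + λ₂^ν)/2)^{1/ν}. -/

import Mathlib

open Matrix Finset
open scoped ComplexOrder

/-- Generalized mean `m_ν(a,b) = ((a^ν + b^ν)/2)^{1/ν}` for `ν < 0`, with
`m₀(a,b) = √(ab)`. -/
noncomputable def genMean (ν a b : ℝ) : ℝ :=
  if ν = 0 then Real.sqrt (a * b) else ((a ^ ν + b ^ ν) / 2) ^ ν⁻¹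

/-- Variance of an arbitrary operator `σ` in a pure state `ψ`. -/
noncomputable def varVec {d : ℕ} (ψ : Fin d → ℂ) (σ : Matrix (Fin d) (Fin d) ℂ) : ℂ :=
  (1 / 2 : ℂ) * (star ψ ⬝ᵥ ((σᴴ * σ + σ * σᴴ) *ᵥ ψ)) -
    ((‖star ψ ⬝ᵥ (σ *ᵥ ψ)‖ : ℝ) : ℂ) ^ 2

lemma genMean_self (ν a : ℝ) (ha : 0 < a) : genMean ν a a = a := by
  unfold genMean
  rcases eq_or_ne ν 0 with h | h
  · simp [h, Real.sqrt_mul_self ha.le]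
  · rw [if_neg h]
    have h2 : (a ^ ν + a ^ ν) / 2 = a ^ ν := by ring
    rw [h2, ← Real.rpow_mul ha.le, mul_inv_cancel₀ h, Real.rpow_one]

lemma genMean_comm (ν a b : ℝ) : genMean ν a b = genMean ν b a := by
  unfold genMean
  rw [mul_comm, add_comm]

theorem stmt11 (ρ σ : Matrix (Fin 2) (Fin 2) ℂ)
    (hρ : ρ.PosSemidef) (htr : ρ.trace = 1)
    (u : Fin 2 → Fin 2 → ℂ) (l : Fin 2 → ℝ)
    (hon : ∀ i j, star (u i) ⬝ᵥ u j = if i = j then 1 else 0)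
    (heig : ∀ i, ρ *ᵥ u i = (l i : ℂ) • u i)
    (hpos : ∀ i, 0 < l i) (hsum : l 0 + l 1 = 1)
    (ν : ℝ) (hν : ν ≤ 0) :
    (1 / 2 : ℂ) * (ρ * (σᴴ * σ + σ * σᴴ)).trace -
        (1 / 2 : ℂ) * ∑ i, ∑ j, ((genMean ν (l i) (l j) : ℝ) : ℂ) *
          (((‖star (u i) ⬝ᵥ (σᴴ *ᵥ u j)‖ : ℝ) : ℂ) ^ 2 +
            ((‖star (u i) ⬝ᵥ (σ *ᵥ u j)‖ : ℝ) : ℂ) ^ 2) =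
      ((1 - 2 * genMean ν (l 0) (l 1) : ℝ) : ℂ) * varVec (u 0) σ := by
  set U : Matrix (Fin 2) (Fin 2) ℂ := Matrix.of fun r c => u c r with hUdef
  have hU : Uᴴ * U = 1 := by
    ext i j
    simpa [Matrix.mul_apply, Matrix.one_apply, hUdef, Matrix.conjTranspose_apply,
      dotProduct] using hon i j
  have hU' : U * Uᴴ = 1 := mul_eq_one_comm.mp hU
  have key : ∀ r s, (∑ i, u i r * star (u i s)) = if r = s then 1 else 0 := by
    intro r s
    have := congrFun (congrFun hU' r) s
    simpa [Matrix.mul_apply, Matrix.one_apply, hUdef, Matrix.conjTranspose_apply] using this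
  have complete : ∀ x y : Fin 2 → ℂ, star x ⬝ᵥ y
      = ∑ i, (star x ⬝ᵥ u i) * (star (u i) ⬝ᵥ y) := by
    intro x y
    have k00 := key 0 0; have k01 := key 0 1; have k10 := key 1 0; have k11 := key 1 1
    simp only [Fin.sum_univ_two, dotProduct, Pi.star_apply, Complex.star_def] at k00 k01 k10 k11 ⊢
    norm_num at k00 k01 k10 k11
    linear_combination -(starRingEnd ℂ) (x 0) * y 0 * k00 - (starRingEnd ℂ) (x 0) * y 1 * k01 -
      (starRingEnd ℂ) (x 1) * y 0 * k10 - (starRingEnd ℂ) (x 1) * y 1 * k11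
  -- quadratic form lemma
  have quad : ∀ (τ : Matrix (Fin 2) (Fin 2) ℂ) (x : Fin 2 → ℂ),
      star x ⬝ᵥ ((τᴴ * τ) *ᵥ x)
        = ∑ j, ((‖star (u j) ⬝ᵥ (τ *ᵥ x)‖ : ℝ) : ℂ) ^ 2 := by
    intro τ x
    have h1 : star x ⬝ᵥ ((τᴴ * τ) *ᵥ x) = star (τ *ᵥ x) ⬝ᵥ (τ *ᵥ x) := by
      rw [← mulVec_mulVec, dotProduct_mulVec, ← star_mulVec]
    rw [h1, complete]
    refine Finset.sum_congr rfl fun j _ => ?_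
    have h2 : star (τ *ᵥ x) ⬝ᵥ u j = star (star (u j) ⬝ᵥ (τ *ᵥ x)) := by
      rw [star_dotProduct]
    rw [h2]
    set z := star (u j) ⬝ᵥ (τ *ᵥ x) with hz
    rw [Complex.star_def]
    rw [show ((‖z‖ : ℝ) : ℂ) ^ 2 = ((‖z‖ ^ 2 : ℝ) : ℂ) by push_cast; ring,
      Complex.sq_norm]
    exact (Complex.normSq_eq_conj_mul_self).symm
  -- hermiticity / eigen action on the left
  have hρh : ρᴴ = ρ := hρ.1
  have heigdot : ∀ i (w : Fin 2 → ℂ),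
      star (u i) ⬝ᵥ (ρ *ᵥ w) = (l i : ℂ) * (star (u i) ⬝ᵥ w) := by
    intro i w
    rw [dotProduct_mulVec]
    have h1 : Matrix.vecMul (star (u i)) ρ = (l i : ℂ) • star (u i) := by
      have h2 := congrArg star (heig i)
      rw [star_mulVec, hρh, star_smul] at h2
      simpa [Complex.star_def, Complex.conj_ofReal] using h2
    rw [h1, smul_dotProduct, smul_eq_mul]
  have habs : ∀ i j, ‖star (u i) ⬝ᵥ (σᴴ *ᵥ u j)‖
      = ‖star (u j) ⬝ᵥ (σ *ᵥ u i)‖ := by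
    intro i j
    have h1 : star (star (u i) ⬝ᵥ (σᴴ *ᵥ u j)) = star (u j) ⬝ᵥ (σ *ᵥ u i) := by
      rw [star_dotProduct, star_star, star_mulVec, conjTranspose_conjTranspose,
        ← dotProduct_mulVec]
    rw [← h1, Complex.star_def, Complex.norm_conj]
  have hquadM : ∀ i, star (u i) ⬝ᵥ ((σᴴ * σ + σ * σᴴ) *ᵥ u i)
      = ∑ j, (((‖star (u j) ⬝ᵥ (σ *ᵥ u i)‖ : ℝ) : ℂ) ^ 2
          + ((‖star (u i) ⬝ᵥ (σ *ᵥ u j)‖ : ℝ) : ℂ) ^ 2) := by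
    intro i
    rw [add_mulVec, dotProduct_add, quad σ (u i),
      show σ * σᴴ = σᴴᴴ * σᴴ by rw [conjTranspose_conjTranspose], quad σᴴ (u i),
      ← Finset.sum_add_distrib]
    refine Finset.sum_congr rfl fun j _ => ?_
    rw [habs j i]
  have htrU : ∀ A : Matrix (Fin 2) (Fin 2) ℂ, A.trace = ∑ i, star (u i) ⬝ᵥ (A *ᵥ u i) := by
    intro A
    have h1 : A.trace = (Uᴴ * A * U).trace := by
      rw [Matrix.trace_mul_cycle, hU', Matrix.one_mul]
    rw [h1, Matrix.trace]
    refine Finset.sum_congr rfl fun i _ => ?_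
    simp only [Matrix.diag_apply, Matrix.mul_apply, Matrix.mulVec, dotProduct,
      Matrix.conjTranspose_apply, hUdef, Matrix.of_apply, Pi.star_apply,
      Finset.mul_sum, Finset.sum_mul]
    rw [Finset.sum_comm]
    refine Finset.sum_congr rfl fun r _ => Finset.sum_congr rfl fun s _ => ?_
    ring
  have htrace : (ρ * (σᴴ * σ + σ * σᴴ)).trace
      = ∑ i, (l i : ℂ) * ∑ j, (((‖star (u j) ⬝ᵥ (σ *ᵥ u i)‖ : ℝ) : ℂ) ^ 2
          + ((‖star (u i) ⬝ᵥ (σ *ᵥ u j)‖ : ℝ) : ℂ) ^ 2) := by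
    rw [htrU]
    refine Finset.sum_congr rfl fun i _ => ?_
    rw [← mulVec_mulVec, heigdot, hquadM]
  have hsumC : ((l 0 : ℝ) : ℂ) + ((l 1 : ℝ) : ℂ) = 1 := by
    rw [← Complex.ofReal_add, hsum, Complex.ofReal_one]
  rw [htrace]
  unfold varVec
  rw [hquadM 0]
  simp only [Fin.sum_univ_two]
  rw [habs 0 0, habs 0 1, habs 1 0, habs 1 1,
    genMean_self ν (l 0) (hpos 0), genMean_self ν (l 1) (hpos 1),
    genMean_comm ν (l 1) (l 0)]
  push_cast
  linear_combination ((((‖star (u 0) ⬝ᵥ (σ *ᵥ u 1)‖ : ℝ) : ℂ) ^ 2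
    + ((‖star (u 1) ⬝ᵥ (σ *ᵥ u 0)‖ : ℝ) : ℂ) ^ 2) / 2) * hsumC
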